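/- Let α be irrational with continued fraction denominators q_m and θ ∈ ℝ such that η/(10 q_{2j}) ≤ ‖2θ + k_j α‖_{ℝ/ℤ} for some integer k_j, with 0 < η ≤ 10⁻². Then for any k = k_j + l₁ q_{2j} with integer l₁ satisfying |l₁| ≤ η q_{2j+1}/(30 q_{2j}), one has ‖2θ + kα‖_{ℝ/ℤ} ≥ ‖2θ + k_j α‖_{ℝ/ℤ} − |l₁|/q_{2j+1} ≥ η/(20 q_{2j}). -/

import Mathlib

/-- Distance from a real number to the nearest integer, ‖x‖_{ℝ/ℤ}. -/
noncomputable def normZ (x : ℝ) : ℝ := |x - round x|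

/-- The Gauss map. -/
noncomputable def cfGauss (x : ℝ) : ℝ := Int.fract x⁻¹

/-- Partial quotients of α ∈ (0,1): `cfA α n` is the paper's a_{n+1}. -/
noncomputable def cfA (α : ℝ) (n : ℕ) : ℤ := ⌊(cfGauss^[n] α)⁻¹⌋

/-- Continued fraction denominators: q_0 = 1, q_1 = a_1, q_{n+2} = a_{n+2} q_{n+1} + q_n. -/
noncomputable def cfQ (α : ℝ) : ℕ → ℤ
  | 0 => 1
  | 1 => cfA α 0
  | (n + 2) => cfA α (n + 1) * cfQ α (n + 1) + cfQ α n

/-- Continued fraction numerators: p_0 = 0, p_1 = 1, p_{n+2} = a_{n+2} p_{n+1} + p_n. -/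
noncomputable def cfP (α : ℝ) : ℕ → ℤ
  | 0 => 0
  | 1 => 1
  | (n + 2) => cfA α (n + 1) * cfP α (n + 1) + cfP α n

lemma normZ_le (x : ℝ) (m : ℤ) : normZ x ≤ |x - m| := by
  unfold normZ
  rcases eq_or_ne m (round x) with h | h
  · simp [h]
  · have h1 : |x - round x| ≤ 1/2 := abs_sub_round x
    have h2 : (1:ℝ) ≤ |(m:ℝ) - round x| := by
      have : (m:ℝ) - round x = ((m - round x : ℤ) : ℝ) := by push_cast; ring
      rw [this, ← Int.cast_abs]
      exact_mod_cast Int.one_le_abs (sub_ne_zero.mpr h)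
    have := abs_sub_abs_le_abs_sub ((m:ℝ) - round x) (x - round x)
    have h3 : |((m:ℝ) - round x) - (x - round x)| = |x - m| := by
      rw [← abs_neg]; ring_nf
    nlinarith [abs_nonneg (x - (m:ℝ))]

lemma normZ_sub_le (x y : ℝ) : normZ x - normZ y ≤ normZ (x + y) := by
  have h1 : normZ x ≤ |x - (round (x+y) - round y : ℤ)| := normZ_le x _
  have h2 : |x - ((round (x+y) : ℝ) - round y)| ≤ |x + y - round (x+y)| + |y - round y| := by
    have : x - ((round (x+y) : ℝ) - round y) = (x + y - round (x+y)) - (y - round y) := by ring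
    rw [this]; exact abs_sub _ _
  unfold normZ at *
  push_cast at h1
  linarith

lemma normZ_int_mul (n : ℤ) (x : ℝ) : normZ ((n:ℝ) * x) ≤ |(n:ℝ)| * normZ x := by
  have h := normZ_le ((n:ℝ) * x) (n * round x)
  calc normZ ((n:ℝ) * x) ≤ |(n:ℝ) * x - (n * round x : ℤ)| := h
    _ = |(n:ℝ)| * normZ x := by
        push_cast
        rw [show (n:ℝ) * x - (n:ℝ) * (round x : ℝ) = (n:ℝ) * (x - round x) by ring,
          abs_mul, normZ]

lemma gauss_iter (α : ℝ) (hα : Irrational α) (h0 : 0 < α) (h1 : α < 1) (n : ℕ) :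
    Irrational (cfGauss^[n] α) ∧ 0 < cfGauss^[n] α ∧ cfGauss^[n] α < 1 := by
  induction n with
  | zero => exact ⟨hα, h0, h1⟩
  | succ n ih =>
    obtain ⟨hi, hp, hl⟩ := ih
    rw [Function.iterate_succ_apply']
    set x := cfGauss^[n] α
    have hinv : Irrational x⁻¹ := hi.inv
    have hfr : Irrational (Int.fract x⁻¹) := by
      rw [Int.fract]; exact hinv.sub_intCast _
    refine ⟨hfr, ?_, Int.fract_lt_one _⟩
    rcases lt_or_eq_of_le (Int.fract_nonneg x⁻¹) with h | h
    · exact h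
    · exact absurd h.symm (fun hc => hfr.ne_rat 0 (by simpa using hc))

lemma cfQ_pos (α : ℝ) (hα : Irrational α) (h0 : 0 < α) (h1 : α < 1) (n : ℕ) :
    1 ≤ cfQ α n := by
  have ha : ∀ m, 1 ≤ cfA α m := by
    intro m
    obtain ⟨_, hp, hl⟩ := gauss_iter α hα h0 h1 m
    have : (1:ℝ) < (cfGauss^[m] α)⁻¹ := (one_lt_inv₀ hp).mpr hl
    exact Int.le_floor.mpr (by exact_mod_cast this.le)
  have key : ∀ m, 1 ≤ cfQ α m ∧ 1 ≤ cfQ α (m+1) := by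
    intro m
    induction m with
    | zero => exact ⟨le_refl 1, ha 0⟩
    | succ m ih => exact ⟨ih.2, by
        show 1 ≤ cfA α (m+1) * cfQ α (m+1) + cfQ α m
        nlinarith [ha (m+1), ih.1, ih.2]⟩
  exact (key n).1

/-- small divisor estimate (3) of the Proposition. -/
theorem stmt6 (α θ η : ℝ) (hα : Irrational α) (h0 : 0 < α) (h1 : α < 1)
    (hη0 : 0 < η) (hη1 : η ≤ 1 / 100) (j : ℕ) (kj : ℤ)
    (hθ : η / (10 * (cfQ α (2 * j) : ℝ)) ≤ normZ (2 * θ + (kj : ℝ) * α))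
    (hqup : normZ ((cfQ α (2 * j) : ℝ) * α) ≤ 1 / (cfQ α (2 * j + 1) : ℝ))
    (k l₁ : ℤ) (hk : k = kj + l₁ * cfQ α (2 * j))
    (hl₁ : |(l₁ : ℝ)| ≤ η * (cfQ α (2 * j + 1) : ℝ) / (30 * (cfQ α (2 * j) : ℝ))) :
    normZ (2 * θ + (kj : ℝ) * α) - |(l₁ : ℝ)| / (cfQ α (2 * j + 1) : ℝ)
        ≤ normZ (2 * θ + (k : ℝ) * α)
    ∧ η / (20 * (cfQ α (2 * j) : ℝ))
        ≤ normZ (2 * θ + (kj : ℝ) * α) - |(l₁ : ℝ)| / (cfQ α (2 * j + 1) : ℝ) := by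
  have hq : (0:ℝ) < (cfQ α (2 * j) : ℝ) := by
    exact_mod_cast lt_of_lt_of_le zero_lt_one (cfQ_pos α hα h0 h1 (2*j))
  have hq' : (0:ℝ) < (cfQ α (2 * j + 1) : ℝ) := by
    exact_mod_cast lt_of_lt_of_le zero_lt_one (cfQ_pos α hα h0 h1 (2*j+1))
  have heq : 2 * θ + (k : ℝ) * α
      = (2 * θ + (kj : ℝ) * α) + (l₁ : ℝ) * ((cfQ α (2 * j) : ℝ) * α) := by
    rw [hk]; push_cast; ring
  have h2 : normZ ((l₁ : ℝ) * ((cfQ α (2 * j) : ℝ) * α))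
      ≤ |(l₁ : ℝ)| / (cfQ α (2 * j + 1) : ℝ) := by
    calc normZ ((l₁ : ℝ) * ((cfQ α (2 * j) : ℝ) * α))
        ≤ |(l₁ : ℝ)| * normZ ((cfQ α (2 * j) : ℝ) * α) := normZ_int_mul l₁ _
      _ ≤ |(l₁ : ℝ)| * (1 / (cfQ α (2 * j + 1) : ℝ)) :=
          mul_le_mul_of_nonneg_left hqup (abs_nonneg _)
      _ = |(l₁ : ℝ)| / (cfQ α (2 * j + 1) : ℝ) := by ring
  have h3 := normZ_sub_le (2 * θ + (kj : ℝ) * α) ((l₁ : ℝ) * ((cfQ α (2 * j) : ℝ) * α))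
  rw [← heq] at h3
  constructor
  · linarith
  · have h4 : |(l₁ : ℝ)| / (cfQ α (2 * j + 1) : ℝ) ≤ η / (30 * (cfQ α (2 * j) : ℝ)) := by
      rw [div_le_div_iff₀ hq' (by positivity)]
      calc |(l₁ : ℝ)| * (30 * (cfQ α (2 * j) : ℝ))
          ≤ (η * (cfQ α (2 * j + 1) : ℝ) / (30 * (cfQ α (2 * j) : ℝ))) * (30 * (cfQ α (2 * j) : ℝ)) :=
            mul_le_mul_of_nonneg_right hl₁ (by positivity)
        _ = η * (cfQ α (2 * j + 1) : ℝ) := by field_simp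
    have h5 : η / (10 * (cfQ α (2 * j) : ℝ)) - η / (30 * (cfQ α (2 * j) : ℝ))
        = η / (15 * (cfQ α (2 * j) : ℝ)) := by field_simp; ring
    have h6 : η / (20 * (cfQ α (2 * j) : ℝ)) ≤ η / (15 * (cfQ α (2 * j) : ℝ)) := by
      apply div_le_div_of_nonneg_left hη0.le (by positivity) (by nlinarith)
    linarith
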